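/- Fix α ∈ ℝ and for a > 1 let τ_a : (1,∞) → ℝ be τ_a(r) = (α/8)·(1 − 1/r)^{1/2}·( ∫_a^r s⁻⁵·(1 − 1/s)^{−3/2} ds − 2·a^{−5/2}·(a − 1)^{−1/2} ). Then for every r > 1 the limit τ(r) = lim_{a→1⁺} τ_a(r) exists, and it is given explicitly by τ(r) = −(α/4)·(1 + 3t² − t⁴ + (1/5)t⁶) where t = (1 − 1/r)^{1/2}. -/

import Mathlib

open MeasureTheory intervalIntegral Filter

noncomputable def SchG (t : ℝ) : ℝ := -2 / t - 6 * t + 2 * t ^ 3 - (2 / 5) * t ^ 5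

noncomputable def SchF (s : ℝ) : ℝ := SchG (Real.sqrt (1 - 1 / s))

lemma rpow_L1 {x : ℝ} (hx : 0 < x) : x ^ (-(1 : ℝ) / 2) = (Real.sqrt x) ⁻¹ := by
  rw [Real.sqrt_eq_rpow, ← Real.rpow_neg hx.le]
  norm_num

lemma rpow_L3 {x : ℝ} (hx : 0 < x) : x ^ (-(3 : ℝ) / 2) = (Real.sqrt x ^ 3)⁻¹ := by
  rw [Real.sqrt_eq_rpow, ← Real.rpow_natCast (x ^ ((1 : ℝ) / 2)) 3,
    ← Real.rpow_mul hx.le, ← Real.rpow_neg hx.le]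
  norm_num

lemma rpow_L5 {x : ℝ} (hx : 0 < x) : x ^ (-(5 : ℝ) / 2) = (Real.sqrt x ^ 5)⁻¹ := by
  rw [Real.sqrt_eq_rpow, ← Real.rpow_natCast (x ^ ((1 : ℝ) / 2)) 5,
    ← Real.rpow_mul hx.le, ← Real.rpow_neg hx.le]
  norm_num

lemma one_sub_inv_pos {s : ℝ} (hs : 1 < s) : 0 < 1 - 1 / s := by
  have hs0 : (0:ℝ) < s := lt_trans one_pos hs
  have : 1 / s < 1 := by rw [div_lt_one hs0]; exact hs
  linarith

lemma SchF_deriv {s : ℝ} (hs : 1 < s) :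
    HasDerivAt SchF ((s ^ 5)⁻¹ * (1 - 1 / s) ^ (-(3 : ℝ) / 2)) s := by
  have hs0 : (0:ℝ) < s := lt_trans one_pos hs
  have hx : 0 < 1 - 1 / s := one_sub_inv_pos hs
  set t := Real.sqrt (1 - 1 / s) with htdef
  have ht : 0 < t := Real.sqrt_pos.mpr hx
  have ht2 : t ^ 2 = 1 - 1 / s := Real.sq_sqrt hx.le
  have h1 : HasDerivAt (fun u : ℝ => 1 - 1 / u) ((s ^ 2)⁻¹) s := by
    simpa [one_div] using (hasDerivAt_inv hs0.ne').const_sub 1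
  have h2 : HasDerivAt (fun u : ℝ => Real.sqrt (1 - 1 / u)) (1 / (2 * t) * (s ^ 2)⁻¹) s :=
    (Real.hasDerivAt_sqrt hx.ne').comp s h1
  have h3 : HasDerivAt SchG (2 / t ^ 2 - 6 + 6 * t ^ 2 - 2 * t ^ 4) t := by
    have hA : HasDerivAt (fun u : ℝ => -2 / u) (2 / t ^ 2) t := by
      have := (hasDerivAt_inv ht.ne').const_mul (-2 : ℝ)
      convert this using 1
      · rfl
      · rfl
      · funext u; ring
      · ring
    have hB := ((hA.sub ((hasDerivAt_id t).const_mul 6)).add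
        ((hasDerivAt_pow 3 t).const_mul 2)).sub ((hasDerivAt_pow 5 t).const_mul (2/5))
    convert hB using 1
    · rfl
    · rfl
    · funext u; simp only [SchG, Pi.sub_apply, Pi.add_apply, id]
    · push_cast; ring
  have h4 := h3.comp s h2
  have h5 : HasDerivAt SchF
      ((2 / t ^ 2 - 6 + 6 * t ^ 2 - 2 * t ^ 4) * (1 / (2 * t) * (s ^ 2)⁻¹)) s := h4
  convert h5 using 1
  have ht4 : t ^ 4 = (1 - 1 / s) ^ 2 := by rw [← ht2]; ring
  have ht3 : t ^ 3 = (1 - 1 / s) * t := by rw [← ht2]; ring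
  rw [rpow_L3 hx, ← htdef, ht3, ht4, ht2]
  have hs1 : s - 1 ≠ 0 := sub_ne_zero.mpr (ne_of_gt hs)
  field_simp [hx.ne', ht.ne', hs0.ne', hs1]
  ring

lemma Sch_integral {a r : ℝ} (ha : 1 < a) (har : a ≤ r) :
    (∫ s in a..r, (s ^ 5)⁻¹ * (1 - 1 / s) ^ (-(3 : ℝ) / 2)) = SchF r - SchF a := by
  apply intervalIntegral.integral_eq_sub_of_hasDerivAt
  · intro x hx
    rw [Set.uIcc_of_le har] at hx
    exact SchF_deriv (lt_of_lt_of_le ha hx.1)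
  · apply ContinuousOn.intervalIntegrable
    rw [Set.uIcc_of_le har]
    have hpos : ∀ x ∈ Set.Icc a r, (1:ℝ) < x := fun x hx => lt_of_lt_of_le ha hx.1
    have c1 : ContinuousOn (fun x : ℝ => (x ^ 5)⁻¹) (Set.Icc a r) :=
      (continuous_pow 5).continuousOn.inv₀ fun x hx =>
        pow_ne_zero 5 (ne_of_gt (lt_trans one_pos (hpos x hx)))
    have c2 : ContinuousOn (fun x : ℝ => (1 - 1 / x) ^ (-(3 : ℝ) / 2)) (Set.Icc a r) := by
      apply ContinuousOn.rpow_const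
      · exact continuousOn_const.sub (continuousOn_const.div continuousOn_id
          fun x hx => ne_of_gt (lt_trans one_pos (hpos x hx)))
      · exact fun x hx => Or.inl (ne_of_gt (one_sub_inv_pos (hpos x hx)))
    exact c1.mul c2


lemma Sch_boundary :
    Tendsto (fun a : ℝ => -SchF a - 2 * a ^ (-(5 : ℝ) / 2) * (a - 1) ^ (-(1 : ℝ) / 2))
      (nhdsWithin 1 (Set.Ioi 1)) (nhds 0) := by
  have key : ∀ a : ℝ, 1 < a →
      -SchF a - 2 * a ^ (-(5 : ℝ) / 2) * (a - 1) ^ (-(1 : ℝ) / 2)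
        = 2 * Real.sqrt (a - 1) * Real.sqrt a * (a ^ 2 + a + 1) / a ^ 3
          + 6 * Real.sqrt (1 - 1 / a) - 2 * Real.sqrt (1 - 1 / a) ^ 3
          + (2 / 5) * Real.sqrt (1 - 1 / a) ^ 5 := by
    intro a ha
    have ha0 : (0:ℝ) < a := lt_trans one_pos ha
    have ham : 0 < a - 1 := by linarith
    have hx : 0 < 1 - 1 / a := one_sub_inv_pos ha
    set u := Real.sqrt (1 - 1 / a) with hu
    have hu0 : 0 < u := Real.sqrt_pos.mpr hx
    have hu2 : u ^ 2 = 1 - 1 / a := Real.sq_sqrt hx.le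
    set sa := Real.sqrt a with hsa
    have hsa0 : 0 < sa := Real.sqrt_pos.mpr ha0
    have hsa2 : sa ^ 2 = a := Real.sq_sqrt ha0.le
    have hsm : Real.sqrt (a - 1) = sa * u := by
      rw [hsa, hu, ← Real.sqrt_mul ha0.le]
      congr 1
      field_simp
    rw [rpow_L5 ha0, rpow_L1 ham, hsm]
    simp only [SchF, SchG, ← hu, ← hsa]
    have h6 : sa ^ 6 = a ^ 3 := by
      have : sa ^ 6 = (sa ^ 2) ^ 3 := by ring
      rw [this, hsa2]
    have hau : a * u ^ 2 = a - 1 := by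
      rw [hu2]; field_simp
    field_simp
    linear_combination
      (10*a^3*(sa^4+sa^2*a+a^2) - 10*u^2*(a^2+a+1)*(sa^6+sa^4*a+sa^2*a^2+a^3)) * hsa2
      + (-10*a^3*(a^2+a+1)) * hau
  have c0 : ContinuousAt (fun a : ℝ => 1 - 1 / a) 1 :=
    continuousAt_const.sub (continuousAt_const.div continuousAt_id (by norm_num))
  have cu : ContinuousAt (fun a : ℝ => Real.sqrt (1 - 1 / a)) 1 :=
    Real.continuous_sqrt.continuousAt.comp c0
  have csm : ContinuousAt (fun a : ℝ => Real.sqrt (a - 1)) 1 :=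
    Real.continuous_sqrt.continuousAt.comp (continuousAt_id.sub continuousAt_const)
  have csa : ContinuousAt (fun a : ℝ => Real.sqrt a) 1 := Real.continuous_sqrt.continuousAt
  have cg : ContinuousAt (fun a : ℝ =>
      2 * Real.sqrt (a - 1) * Real.sqrt a * (a ^ 2 + a + 1) / a ^ 3
        + 6 * Real.sqrt (1 - 1 / a) - 2 * Real.sqrt (1 - 1 / a) ^ 3
        + (2 / 5) * Real.sqrt (1 - 1 / a) ^ 5) 1 := by
    apply ContinuousAt.add
    apply ContinuousAt.sub
    apply ContinuousAt.add
    · exact (((continuousAt_const.mul csm).mul csa).mul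
        (((continuousAt_id.pow 2).add continuousAt_id).add continuousAt_const)).div
        (continuousAt_id.pow 3) (by norm_num)
    · exact continuousAt_const.mul cu
    · exact continuousAt_const.mul (cu.pow 3)
    · exact continuousAt_const.mul (cu.pow 5)
  have hg0 : Tendsto (fun a : ℝ =>
      2 * Real.sqrt (a - 1) * Real.sqrt a * (a ^ 2 + a + 1) / a ^ 3
        + 6 * Real.sqrt (1 - 1 / a) - 2 * Real.sqrt (1 - 1 / a) ^ 3
        + (2 / 5) * Real.sqrt (1 - 1 / a) ^ 5) (nhds 1) (nhds 0) := by
    have := cg.tendsto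
    convert this using 2
    norm_num
  refine (hg0.mono_left nhdsWithin_le_nhds).congr' ?_
  filter_upwards [self_mem_nhdsWithin] with a ha
  exact (key a ha).symm


/-- Existence and closed form of the limit `τ = lim_{a→1⁺} τ_a` on the
Schwarzschild metric with mass `m = 1/2`: for each `r > 1`, with
`t = (1 − 1/r)^{1/2}`,
`τ_a(r) = (α/8)·(1 − 1/r)^{1/2}·(∫_a^r s⁻⁵·(1 − 1/s)^{−3/2} ds − 2·a^{−5/2}·(a−1)^{−1/2})`
converges as `a → 1⁺` to `−(α/4)·(1 + 3t² − t⁴ + (1/5)t⁶)`. -/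
theorem schwarzschild_potential_limit
    (α r : ℝ) (hr : 1 < r) :
    Tendsto
      (fun a : ℝ =>
        (α / 8) * Real.sqrt (1 - 1 / r) *
          ((∫ s in a..r, (s ^ 5)⁻¹ * (1 - 1 / s) ^ (-(3 : ℝ) / 2)) -
            2 * a ^ (-(5 : ℝ) / 2) * (a - 1) ^ (-(1 : ℝ) / 2)))
      (nhdsWithin 1 (Set.Ioi 1))
      (nhds (-(α / 4) *
        (1 + 3 * Real.sqrt (1 - 1 / r) ^ 2 - Real.sqrt (1 - 1 / r) ^ 4 +
          (1 / 5) * Real.sqrt (1 - 1 / r) ^ 6))) := by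
  have hxr : 0 < 1 - 1 / r := one_sub_inv_pos hr
  set t := Real.sqrt (1 - 1 / r) with htdef
  have ht : 0 < t := Real.sqrt_pos.mpr hxr
  have hmain : Tendsto
      (fun a : ℝ => (α / 8) * t *
        (SchF r + (-SchF a - 2 * a ^ (-(5 : ℝ) / 2) * (a - 1) ^ (-(1 : ℝ) / 2))))
      (nhdsWithin 1 (Set.Ioi 1)) (nhds ((α / 8) * t * (SchF r + 0))) :=
    (tendsto_const_nhds.add Sch_boundary).const_mul _
  have hev : ∀ᶠ a in nhdsWithin 1 (Set.Ioi 1),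
      (α / 8) * t *
        (SchF r + (-SchF a - 2 * a ^ (-(5 : ℝ) / 2) * (a - 1) ^ (-(1 : ℝ) / 2)))
      = (α / 8) * t *
        ((∫ s in a..r, (s ^ 5)⁻¹ * (1 - 1 / s) ^ (-(3 : ℝ) / 2)) -
          2 * a ^ (-(5 : ℝ) / 2) * (a - 1) ^ (-(1 : ℝ) / 2)) := by
    have h2 : ∀ᶠ a in nhdsWithin 1 (Set.Ioi 1), a < r :=
      Filter.Eventually.filter_mono nhdsWithin_le_nhds
        (eventually_of_mem (Iio_mem_nhds hr) fun x hx => hx)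
    filter_upwards [self_mem_nhdsWithin, h2] with a ha har
    rw [Sch_integral ha (le_of_lt har)]
    ring
  have := hmain.congr' hev
  convert this using 2
  simp only [SchF, SchG, ← htdef]
  field_simp
  ring
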